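/- Let p < q be primes, let α, β be positive integers, let ε be a natural number with β > ε, set n = p^α·q^β and m = p^{α+ε}·q^{β−ε}, and let u ≥ 2 be an integer with gcd(m, u) = 1 and gcd(n, u) = 1. Then D(n·u‖m·u) = (α + β)/(α + β + Ω(u)) · D(n‖m). -/

import Mathlib

/-- `Ω(n)`: number of prime factors of `n` counted with multiplicity. -/
def bigOmega (n : ℕ) : ℕ := n.primeFactorsList.length

/-- The Kullback–Leibler divergence of two positive integers
`a = q_1^{a_1} ⋯ q_r^{a_r}` and `b = q'_1^{b_1} ⋯ q'_r^{b_r}` (primes listed in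
ascending order): `D(a‖b) = log(Ω(b)/Ω(a)) − (1/Ω(a)) ∑_i a_i log (b_i/a_i)`. -/
noncomputable def numDivergence (a b : ℕ) : ℝ :=
  Real.log ((bigOmega b : ℝ) / (bigOmega a : ℝ)) -
    (1 / (bigOmega a : ℝ)) *
      ∑ i ∈ Finset.range a.primeFactors.card,
        (a.factorization ((a.primeFactors.sort (· ≤ ·)).getD i 1) : ℝ) *
          Real.log ((b.factorization ((b.primeFactors.sort (· ≤ ·)).getD i 1) : ℝ) /
            (a.factorization ((a.primeFactors.sort (· ≤ ·)).getD i 1) : ℝ))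

lemma list_sum_getD (L : List ℕ) (g : ℕ → ℝ) :
    ∑ i ∈ Finset.range L.length, g (L.getD i 1) = (L.map g).sum := by
  induction L with
  | nil => simp
  | cons a t ih =>
    rw [List.length_cons, Finset.sum_range_succ']
    simp only [List.getD, List.getD_eq_getElem?_getD] at ih ⊢; simp [ih, add_comm]

lemma sum_getD (s : Finset ℕ) (g : ℕ → ℝ) :
    ∑ i ∈ Finset.range s.card, g ((s.sort (· ≤ ·)).getD i 1) = ∑ r ∈ s, g r := by
  rw [← Finset.length_sort (α := ℕ) (· ≤ ·), list_sum_getD,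
    List.Perm.sum_eq (List.Perm.map g (Finset.sort_perm_toList (s := s) (r := (· ≤ ·)))),
    Finset.sum_map_toList]

lemma bigOmega_mul {a b : ℕ} (ha : a ≠ 0) (hb : b ≠ 0) :
    bigOmega (a * b) = bigOmega a + bigOmega b := by
  unfold bigOmega
  rw [(Nat.perm_primeFactorsList_mul ha hb).length_eq, List.length_append]

lemma bigOmega_pow {p : ℕ} (hp : p.Prime) (k : ℕ) : bigOmega (p ^ k) = k := by
  unfold bigOmega; rw [hp.primeFactorsList_pow]; simp

theorem divergence_mul_coprime (p q α β ε : ℕ) (hp : p.Prime) (hq : q.Prime)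
    (hpq : p < q) (hα : 0 < α) (hβ : 0 < β) (hε : ε < β)
    (n m : ℕ) (hn : n = p ^ α * q ^ β) (hm : m = p ^ (α + ε) * q ^ (β - ε))
    (u : ℕ) (hu : 2 ≤ u) (hmu : Nat.gcd m u = 1) (hnu : Nat.gcd n u = 1) :
    numDivergence (n * u) (m * u) =
      ((α : ℝ) + β) / ((α : ℝ) + β + (bigOmega u : ℝ)) * numDivergence n m := by
  have hpq' : p ≠ q := hpq.ne
  have hu0 : u ≠ 0 := by omega
  have hpα : p ^ α ≠ 0 := pow_ne_zero _ hp.pos.ne'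
  have hqβ : q ^ β ≠ 0 := pow_ne_zero _ hq.pos.ne'
  have hpα' : p ^ (α + ε) ≠ 0 := pow_ne_zero _ hp.pos.ne'
  have hqβ' : q ^ (β - ε) ≠ 0 := pow_ne_zero _ hq.pos.ne'
  have hn0 : n ≠ 0 := by rw [hn]; positivity
  have hm0 : m ≠ 0 := by rw [hm]; positivity
  -- prime factor sets
  have hPn : n.primeFactors = {p, q} := by
    rw [hn, Nat.primeFactors_mul hpα hqβ,
      Nat.primeFactors_prime_pow hα.ne' hp, Nat.primeFactors_prime_pow hβ.ne' hq]
    rfl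
  have hPm : m.primeFactors = {p, q} := by
    rw [hm, Nat.primeFactors_mul hpα' hqβ',
      Nat.primeFactors_prime_pow (by omega) hp, Nat.primeFactors_prime_pow (by omega) hq]
    rfl
  -- factorizations
  have hfn : n.factorization = Finsupp.single p α + Finsupp.single q β := by
    rw [hn, Nat.factorization_mul hpα hqβ, hp.factorization_pow, hq.factorization_pow]
  have hfm : m.factorization = Finsupp.single p (α + ε) + Finsupp.single q (β - ε) := by
    rw [hm, Nat.factorization_mul hpα' hqβ', hp.factorization_pow, hq.factorization_pow]
  have hfn_p : n.factorization p = α := by simp [hfn, Finsupp.single_apply, hpq', hpq'.symm]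
  have hfn_q : n.factorization q = β := by simp [hfn, Finsupp.single_apply, hpq', hpq'.symm]
  have hfm_p : m.factorization p = α + ε := by simp [hfm, Finsupp.single_apply, hpq', hpq'.symm]
  have hfm_q : m.factorization q = β - ε := by simp [hfm, Finsupp.single_apply, hpq', hpq'.symm]
  -- coprimality / disjointness
  have hdn : Disjoint n.primeFactors u.primeFactors :=
    Nat.Coprime.disjoint_primeFactors hnu
  have hdm : Disjoint m.primeFactors u.primeFactors :=
    Nat.Coprime.disjoint_primeFactors hmu
  have hdisj : Disjoint ({p, q} : Finset ℕ) u.primeFactors := hPn ▸ hdn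
  have hfu_zero : ∀ r ∈ u.primeFactors, n.factorization r = 0 ∧ m.factorization r = 0 := by
    intro r hr
    constructor <;> [skip; skip] <;>
      · rw [← Finsupp.notMem_support_iff, Nat.support_factorization]
        first
        | exact fun h => (Finset.disjoint_left.mp hdn h) hr
        | exact fun h => (Finset.disjoint_left.mp hdm h) hr
  have hup : u.factorization p = 0 := by
    rw [← Finsupp.notMem_support_iff, Nat.support_factorization]
    intro h
    exact (Finset.disjoint_left.mp hdn (by simp [hPn])) h
  have huq : u.factorization q = 0 := by
    rw [← Finsupp.notMem_support_iff, Nat.support_factorization]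
    intro h
    exact (Finset.disjoint_left.mp hdn (by simp [hPn])) h
  -- factorization of products
  have hFnu : (n * u).factorization = n.factorization + u.factorization :=
    Nat.factorization_mul hn0 hu0
  have hFmu : (m * u).factorization = m.factorization + u.factorization :=
    Nat.factorization_mul hm0 hu0
  -- big omegas
  have hΩn : bigOmega n = α + β := by
    rw [hn, bigOmega_mul hpα hqβ, bigOmega_pow hp, bigOmega_pow hq]
  have hΩm : bigOmega m = α + β := by
    rw [hm, bigOmega_mul hpα' hqβ', bigOmega_pow hp, bigOmega_pow hq]; omega
  have hΩnu : bigOmega (n * u) = α + β + bigOmega u := by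
    rw [bigOmega_mul hn0 hu0, hΩn]
  have hΩmu : bigOmega (m * u) = α + β + bigOmega u := by
    rw [bigOmega_mul hm0 hu0, hΩm]
  -- prime factor sets of products
  have hPnu : (n * u).primeFactors = {p, q} ∪ u.primeFactors := by
    rw [Nat.primeFactors_mul hn0 hu0, hPn]
  have hPmu : (m * u).primeFactors = {p, q} ∪ u.primeFactors := by
    rw [Nat.primeFactors_mul hm0 hu0, hPm]
  -- the common sum value
  set S : ℝ := (α : ℝ) * Real.log (((α : ℝ) + ε) / α) +
      (β : ℝ) * Real.log (((β : ℝ) - ε) / β) with hS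
  have hεβ : ((β - ε : ℕ) : ℝ) = (β : ℝ) - ε := by
    push_cast [Nat.cast_sub hε.le]; ring
  -- sum for n, m
  have hsum1 : ∑ i ∈ Finset.range n.primeFactors.card,
      (n.factorization ((n.primeFactors.sort (· ≤ ·)).getD i 1) : ℝ) *
        Real.log ((m.factorization ((m.primeFactors.sort (· ≤ ·)).getD i 1) : ℝ) /
          (n.factorization ((n.primeFactors.sort (· ≤ ·)).getD i 1) : ℝ)) = S := by
    rw [hPn, hPm, sum_getD ({p, q} : Finset ℕ)
      (fun r => (n.factorization r : ℝ) *
        Real.log ((m.factorization r : ℝ) / (n.factorization r : ℝ))),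
      Finset.sum_pair hpq', hfn_p, hfn_q, hfm_p, hfm_q, hS, hεβ]
    push_cast
    ring
  -- sum for n*u, m*u
  have hsum2 : ∑ i ∈ Finset.range (n * u).primeFactors.card,
      ((n * u).factorization (((n * u).primeFactors.sort (· ≤ ·)).getD i 1) : ℝ) *
        Real.log (((m * u).factorization (((m * u).primeFactors.sort (· ≤ ·)).getD i 1) : ℝ) /
          ((n * u).factorization (((n * u).primeFactors.sort (· ≤ ·)).getD i 1) : ℝ)) = S := by
    rw [hPnu, hPmu, sum_getD (({p, q} : Finset ℕ) ∪ u.primeFactors)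
      (fun r => ((n * u).factorization r : ℝ) *
        Real.log (((m * u).factorization r : ℝ) / ((n * u).factorization r : ℝ))),
      Finset.sum_union hdisj, Finset.sum_pair hpq']
    have h1 : ∑ r ∈ u.primeFactors, ((n * u).factorization r : ℝ) *
        Real.log (((m * u).factorization r : ℝ) / ((n * u).factorization r : ℝ)) = 0 := by
      refine Finset.sum_eq_zero fun r hr => ?_
      obtain ⟨h1, h2⟩ := hfu_zero r hr
      rw [hFnu, hFmu]
      simp only [Finsupp.add_apply, h1, h2, zero_add]
      rcases eq_or_ne (u.factorization r) 0 with h | h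
      · simp [h]
      · rw [div_self (by exact_mod_cast h), Real.log_one, mul_zero]
    rw [h1, add_zero, hFnu, hFmu]
    simp only [Finsupp.add_apply, hfn_p, hfn_q, hfm_p, hfm_q, hup, huq, add_zero]
    rw [hS, hεβ]
    push_cast
    ring
  -- finish
  unfold numDivergence
  rw [hsum1, hsum2, hΩn, hΩm, hΩnu, hΩmu]
  have hΩu : 1 ≤ bigOmega u := by
    have : u.primeFactorsList ≠ [] := by
      intro h
      rcases (Nat.primeFactorsList_eq_nil u).mp h with h | h <;> omega
    unfold bigOmega
    exact List.length_pos_iff.mpr this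
  have hT : ((α + β + bigOmega u : ℕ) : ℝ) ≠ 0 := by positivity
  have hAB : ((α + β : ℕ) : ℝ) ≠ 0 := by positivity
  rw [div_self hT, div_self hAB, Real.log_one]
  push_cast
  field_simp
  ring
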